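/- Let n ≥ 1, α = (α_1, …, α_{n+1}) ∈ ℝ^{n+1} with α_1 ≥ α_2 ≥ … ≥ α_{n+1}, and β = (β_1, …, β_n) ∈ ℝ^n with β_1 ≥ β_2 ≥ … ≥ β_n. Then there exists t ∈ ℝ such that r(t, α, β) = 0 if and only if α_{n+1−k} + β_k ≥ α_{n+2−l} + β_l for all k, l ∈ {1, …, n}. -/
import Mathlib


open Finset

/-- For `n ≥ 1`, `α = (α 1, …, α (n+1))`, `β = (β 1, …, β n)` and `t ∈ ℝ`,
`r(t, α, β) = Σ_{l=1}^{n} Σ_{k=1}^{n+1} |t + α_k + β_l|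
  − Σ_{1 ≤ k < l ≤ n+1} |α_k − α_l| − Σ_{1 ≤ k < l ≤ n} |β_k − β_l|`. -/
noncomputable def rfun (n : ℕ) (t : ℝ) (α β : ℕ → ℝ) : ℝ :=
  (∑ l ∈ Icc 1 n, ∑ k ∈ Icc 1 (n + 1), |t + α k + β l|)
    - (∑ k ∈ Icc 1 (n + 1), ∑ l ∈ Ioc k (n + 1), |α k - α l|)
    - (∑ k ∈ Icc 1 n, ∑ l ∈ Ioc k n, |β k - β l|)

private lemma mono_aux {m : ℕ} {f : ℕ → ℝ}
    (hf : ∀ k, 1 ≤ k → k + 1 ≤ m → f (k + 1) ≤ f k)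
    {k l : ℕ} (hk : 1 ≤ k) (hkl : k ≤ l) (hl : l ≤ m) : f l ≤ f k := by
  induction l, hkl using Nat.le_induction with
  | base => exact le_refl _
  | succ l hl' ih =>
    exact le_trans (hf l (le_trans hk hl') hl) (ih (by omega))

private lemma lemA (f : ℕ → ℝ) (m : ℕ) :
    ∑ k ∈ Icc 1 m, ∑ l ∈ Ioc k m, (f k - f l)
      = ∑ k ∈ Icc 1 m, (((m : ℝ) + 1) - 2 * k) * f k := by
  induction m with
  | zero => simp
  | succ m ih =>
    rw [Finset.sum_Icc_succ_top (by omega), Finset.sum_Icc_succ_top (by omega)]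
    have h1 : ∑ k ∈ Icc 1 m, ∑ l ∈ Ioc k (m + 1), (f k - f l)
        = (∑ k ∈ Icc 1 m, ∑ l ∈ Ioc k m, (f k - f l))
          + (∑ k ∈ Icc 1 m, (f k - f (m + 1))) := by
      rw [← Finset.sum_add_distrib]
      refine Finset.sum_congr rfl fun k hk => ?_
      rw [Finset.sum_Ioc_succ_top (mem_Icc.mp hk).2]
    rw [h1, ih]
    have h2 : ∑ k ∈ Icc 1 m, (f k - f (m + 1))
        = (∑ k ∈ Icc 1 m, f k) - (m : ℝ) * f (m + 1) := by
      rw [Finset.sum_sub_distrib, Finset.sum_const, Nat.card_Icc]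
      simp [nsmul_eq_mul]
    have h3 : ∑ k ∈ Icc 1 m, ((↑(m + 1) : ℝ) + 1 - 2 * k) * f k
        = (∑ k ∈ Icc 1 m, (((m : ℝ) + 1) - 2 * k) * f k) + ∑ k ∈ Icc 1 m, f k := by
      rw [← Finset.sum_add_distrib]
      refine Finset.sum_congr rfl fun k _ => ?_
      push_cast; ring
    have h4 : Ioc (m + 1) (m + 1) = (∅ : Finset ℕ) := by simp
    rw [h2, h3, h4, Finset.sum_empty]
    push_cast; ring

private lemma sum_lin (n : ℕ) : ∑ l ∈ Icc 1 n, ((n : ℝ) + 1 - 2 * l) = 0 := by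
  induction n with
  | zero => simp
  | succ n ih =>
    rw [Finset.sum_Icc_succ_top (by omega)]
    have h1 : ∑ l ∈ Icc 1 n, ((↑(n + 1) : ℝ) + 1 - 2 * l)
        = (∑ l ∈ Icc 1 n, ((n : ℝ) + 1 - 2 * l)) + ∑ l ∈ Icc 1 n, (1 : ℝ) := by
      rw [← Finset.sum_add_distrib]
      refine Finset.sum_congr rfl fun l _ => ?_
      push_cast; ring
    rw [h1, ih, Finset.sum_const, Nat.card_Icc]
    simp [nsmul_eq_mul]
    ring

private lemma castsub (a b : ℕ) (h : b ≤ a) : ((a - b : ℕ) : ℝ) = (a : ℝ) - b := by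
  push_cast [h]; ring

private lemma S1 (n k : ℕ) (hk1 : 1 ≤ k) (hk2 : k ≤ n + 1) :
    ∑ l ∈ Icc 1 n, (if k + l ≤ n + 1 then (1 : ℝ) else -1) = (n : ℝ) + 2 - 2 * k := by
  have h1 : ∀ l ∈ Icc 1 n, (if k + l ≤ n + 1 then (1 : ℝ) else -1)
      = (if k + l ≤ n + 1 then (2 : ℝ) else 0) - 1 := by
    intro l _; split <;> norm_num
  rw [Finset.sum_congr rfl h1, Finset.sum_sub_distrib, ← Finset.sum_filter]
  have h2 : (Icc 1 n).filter (fun l => k + l ≤ n + 1) = Icc 1 (n + 1 - k) := by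
    ext l; simp only [Finset.mem_filter, Finset.mem_Icc]; omega
  rw [h2, Finset.sum_const, Finset.sum_const, Nat.card_Icc, Nat.card_Icc]
  simp only [nsmul_eq_mul]
  have h3 : (n + 1 - k + 1 - 1 : ℕ) = n + 1 - k := by omega
  rw [h3, castsub (n + 1) k hk2]
  have h4 : (n + 1 - 1 : ℕ) = n := by omega
  rw [h4]
  push_cast; ring

private lemma S2 (n l : ℕ) (hl1 : 1 ≤ l) (hl2 : l ≤ n) :
    ∑ k ∈ Icc 1 (n + 1), (if k + l ≤ n + 1 then (1 : ℝ) else -1) = (n : ℝ) + 1 - 2 * l := by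
  have h1 : ∀ k ∈ Icc 1 (n + 1), (if k + l ≤ n + 1 then (1 : ℝ) else -1)
      = (if k + l ≤ n + 1 then (2 : ℝ) else 0) - 1 := by
    intro k _; split <;> norm_num
  rw [Finset.sum_congr rfl h1, Finset.sum_sub_distrib, ← Finset.sum_filter]
  have h2 : (Icc 1 (n + 1)).filter (fun k => k + l ≤ n + 1) = Icc 1 (n + 1 - l) := by
    ext k; simp only [Finset.mem_filter, Finset.mem_Icc]; omega
  rw [h2, Finset.sum_const, Finset.sum_const, Nat.card_Icc, Nat.card_Icc]
  simp only [nsmul_eq_mul]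
  have h3 : (n + 1 - l + 1 - 1 : ℕ) = n + 1 - l := by omega
  rw [h3, castsub (n + 1) l (by omega)]
  have h4 : (n + 1 + 1 - 1 : ℕ) = n + 1 := by omega
  rw [h4]
  push_cast; ring

private lemma key (n : ℕ) (t : ℝ) (α β : ℕ → ℝ)
    (hα : ∀ k, 1 ≤ k → k ≤ n → α (k + 1) ≤ α k)
    (hβ : ∀ k, 1 ≤ k → k + 1 ≤ n → β (k + 1) ≤ β k) :
    rfun n t α β = ∑ l ∈ Icc 1 n, ∑ k ∈ Icc 1 (n + 1),
      (|t + α k + β l| - (if k + l ≤ n + 1 then (1 : ℝ) else -1) * (t + α k + β l)) := by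
  have hα' : ∀ k l, 1 ≤ k → k ≤ l → l ≤ n + 1 → α l ≤ α k := fun k l h1 h2 h3 =>
    mono_aux (fun k hk1 hk2 => hα k hk1 (by omega)) h1 h2 h3
  have hβ' : ∀ k l, 1 ≤ k → k ≤ l → l ≤ n → β l ≤ β k := fun k l h1 h2 h3 =>
    mono_aux hβ h1 h2 h3
  have hA : ∑ k ∈ Icc 1 (n + 1), ∑ l ∈ Ioc k (n + 1), |α k - α l|
      = ∑ k ∈ Icc 1 (n + 1), ((n : ℝ) + 2 - 2 * k) * α k := by
    have e1 : ∑ k ∈ Icc 1 (n + 1), ∑ l ∈ Ioc k (n + 1), |α k - α l|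
        = ∑ k ∈ Icc 1 (n + 1), ∑ l ∈ Ioc k (n + 1), (α k - α l) := by
      refine Finset.sum_congr rfl fun k hk => Finset.sum_congr rfl fun l hl => ?_
      have hk' := mem_Icc.mp hk; have hl' := mem_Ioc.mp hl
      exact abs_of_nonneg (sub_nonneg.mpr (hα' k l hk'.1 hl'.1.le hl'.2))
    rw [e1, lemA]
    refine Finset.sum_congr rfl fun k _ => ?_
    push_cast; ring
  have hB : ∑ k ∈ Icc 1 n, ∑ l ∈ Ioc k n, |β k - β l|
      = ∑ l ∈ Icc 1 n, ((n : ℝ) + 1 - 2 * l) * β l := by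
    have e1 : ∑ k ∈ Icc 1 n, ∑ l ∈ Ioc k n, |β k - β l|
        = ∑ k ∈ Icc 1 n, ∑ l ∈ Ioc k n, (β k - β l) := by
      refine Finset.sum_congr rfl fun k hk => Finset.sum_congr rfl fun l hl => ?_
      have hk' := mem_Icc.mp hk; have hl' := mem_Ioc.mp hl
      exact abs_of_nonneg (sub_nonneg.mpr (hβ' k l hk'.1 hl'.1.le hl'.2))
    rw [e1, lemA]
  have hE : ∑ l ∈ Icc 1 n, ∑ k ∈ Icc 1 (n + 1),
        (if k + l ≤ n + 1 then (1 : ℝ) else -1) * (t + α k + β l)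
      = (∑ k ∈ Icc 1 (n + 1), ((n : ℝ) + 2 - 2 * k) * α k)
        + (∑ l ∈ Icc 1 n, ((n : ℝ) + 1 - 2 * l) * β l) := by
    have step1 : ∀ l ∈ Icc 1 n,
        ∑ k ∈ Icc 1 (n + 1), (if k + l ≤ n + 1 then (1 : ℝ) else -1) * (t + α k + β l)
        = (∑ k ∈ Icc 1 (n + 1), (if k + l ≤ n + 1 then (1 : ℝ) else -1) * α k)
          + ((n : ℝ) + 1 - 2 * l) * (t + β l) := by
      intro l hl
      have hl' := mem_Icc.mp hl
      have e : ∀ k ∈ Icc 1 (n + 1),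
          (if k + l ≤ n + 1 then (1 : ℝ) else -1) * (t + α k + β l)
          = (if k + l ≤ n + 1 then (1 : ℝ) else -1) * α k
            + (if k + l ≤ n + 1 then (1 : ℝ) else -1) * (t + β l) := by
        intro k _; ring
      rw [Finset.sum_congr rfl e, Finset.sum_add_distrib, ← Finset.sum_mul,
        S2 n l hl'.1 hl'.2]
    rw [Finset.sum_congr rfl step1, Finset.sum_add_distrib]
    congr 1
    · rw [Finset.sum_comm]
      refine Finset.sum_congr rfl fun k hk => ?_
      have hk' := mem_Icc.mp hk
      rw [← Finset.sum_mul, S1 n k hk'.1 hk'.2]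
    · have e : ∀ l ∈ Icc 1 n, ((n : ℝ) + 1 - 2 * l) * (t + β l)
          = ((n : ℝ) + 1 - 2 * l) * t + ((n : ℝ) + 1 - 2 * l) * β l := by
        intro l _; ring
      rw [Finset.sum_congr rfl e, Finset.sum_add_distrib, ← Finset.sum_mul, sum_lin n,
        zero_mul, zero_add]
  have e2 : ∑ l ∈ Icc 1 n, ∑ k ∈ Icc 1 (n + 1),
        (|t + α k + β l| - (if k + l ≤ n + 1 then (1 : ℝ) else -1) * (t + α k + β l))
      = (∑ l ∈ Icc 1 n, ∑ k ∈ Icc 1 (n + 1), |t + α k + β l|)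
        - ∑ l ∈ Icc 1 n, ∑ k ∈ Icc 1 (n + 1),
            (if k + l ≤ n + 1 then (1 : ℝ) else -1) * (t + α k + β l) := by
    rw [← Finset.sum_sub_distrib]
    refine Finset.sum_congr rfl fun l _ => ?_
    rw [← Finset.sum_sub_distrib]
  unfold rfun
  rw [hA, hB, e2, hE]
  ring

/-- Let `n ≥ 1`, `α_1 ≥ … ≥ α_{n+1}`, `β_1 ≥ … ≥ β_n`.  There exists `t ∈ ℝ` with
`r(t, α, β) = 0` if and only if `α_{n+1−k} + β_k ≥ α_{n+2−l} + β_l` for all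
`k, l ∈ {1, …, n}`. -/
theorem statement1 (n : ℕ) (hn : 1 ≤ n) (α β : ℕ → ℝ)
    (hα : ∀ k, 1 ≤ k → k ≤ n → α (k + 1) ≤ α k)
    (hβ : ∀ k, 1 ≤ k → k + 1 ≤ n → β (k + 1) ≤ β k) :
    (∃ t : ℝ, rfun n t α β = 0) ↔
      (∀ k l, 1 ≤ k → k ≤ n → 1 ≤ l → l ≤ n →
        α (n + 2 - l) + β l ≤ α (n + 1 - k) + β k) := by
  have hα' : ∀ k l, 1 ≤ k → k ≤ l → l ≤ n + 1 → α l ≤ α k := fun k l h1 h2 h3 =>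
    mono_aux (fun k hk1 hk2 => hα k hk1 (by omega)) h1 h2 h3
  constructor
  · rintro ⟨t, ht⟩
    rw [key n t α β hα hβ] at ht
    have hterm : ∀ l ∈ Icc 1 n, ∀ k ∈ Icc 1 (n + 1),
        (0 : ℝ) ≤ |t + α k + β l| - (if k + l ≤ n + 1 then (1 : ℝ) else -1) * (t + α k + β l) := by
      intro l _ k _
      split
      · linarith [le_abs_self (t + α k + β l)]
      · linarith [neg_abs_le (t + α k + β l)]
    have houter := (Finset.sum_eq_zero_iff_of_nonneg
      (fun l hl => Finset.sum_nonneg (fun k hk => hterm l hl k hk))).mp ht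
    have hzero : ∀ l ∈ Icc 1 n, ∀ k ∈ Icc 1 (n + 1),
        |t + α k + β l| - (if k + l ≤ n + 1 then (1 : ℝ) else -1) * (t + α k + β l) = 0 := by
      intro l hl k hk
      exact (Finset.sum_eq_zero_iff_of_nonneg (fun k hk => hterm l hl k hk)).mp
        (houter l hl) k hk
    intro k l hk1 hk2 hl1 hl2
    have e1 := hzero k (mem_Icc.mpr ⟨hk1, hk2⟩) (n + 1 - k) (mem_Icc.mpr ⟨by omega, by omega⟩)
    have e2 := hzero l (mem_Icc.mpr ⟨hl1, hl2⟩) (n + 2 - l) (mem_Icc.mpr ⟨by omega, by omega⟩)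
    rw [if_pos (by omega)] at e1
    rw [if_neg (by omega)] at e2
    have p1 : 0 ≤ t + α (n + 1 - k) + β k := by
      have := abs_nonneg (t + α (n + 1 - k) + β k); linarith
    have p2 : t + α (n + 2 - l) + β l ≤ 0 := by
      have := abs_nonneg (t + α (n + 2 - l) + β l)
      have h5 := le_abs_self (t + α (n + 2 - l) + β l)
      linarith
    linarith
  · intro h
    obtain ⟨l₀, hl₀, hmax⟩ := Finset.exists_max_image (Icc 1 n)
      (fun l => α (n + 2 - l) + β l) ⟨1, mem_Icc.mpr ⟨le_refl 1, hn⟩⟩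
    obtain ⟨hl01, hl02⟩ := mem_Icc.mp hl₀
    refine ⟨-(α (n + 2 - l₀) + β l₀), ?_⟩
    rw [key n _ α β hα hβ]
    apply Finset.sum_eq_zero
    intro l hl
    apply Finset.sum_eq_zero
    intro k hk
    obtain ⟨hl1, hl2⟩ := mem_Icc.mp hl
    obtain ⟨hk1, hk2⟩ := mem_Icc.mp hk
    by_cases hc : k + l ≤ n + 1
    · rw [if_pos hc]
      have h1 : α (n + 1 - l) ≤ α k := hα' k (n + 1 - l) hk1 (by omega) (by omega)
      have h2 : α (n + 2 - l₀) + β l₀ ≤ α (n + 1 - l) + β l := h l l₀ hl1 hl2 hl01 hl02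
      have h3 : 0 ≤ -(α (n + 2 - l₀) + β l₀) + α k + β l := by linarith
      rw [abs_of_nonneg h3]; ring
    · rw [if_neg hc]
      have h1 : α k ≤ α (n + 2 - l) := hα' (n + 2 - l) k (by omega) (by omega) hk2
      have h2 : α (n + 2 - l) + β l ≤ α (n + 2 - l₀) + β l₀ := hmax l hl
      have h3 : -(α (n + 2 - l₀) + β l₀) + α k + β l ≤ 0 := by linarith
      rw [abs_of_nonpos h3]; ring
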